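/- arXiv:1605.06187 — 6 statements merged into one kernel-verified Lean document; each statement's English description precedes it below -/
import Mathlib

section
/- Let J : Z^d × Z^d → [0,∞) be a system of interaction coefficients. For two configurations u, v : Z^d → {-1,1} define min{u,v} and max{u,v} pointwise, and for sets Γ, Ω ⊆ Z^d define I_{Γ,Ω}(w) := Σ_{i ∈ Γ, j ∈ Ω} J_{ij}(1 - w_i w_j). Then I_{Γ,Ω}(min{u,v}) + I_{Γ,Ω}(max{u,v}) ≤ I_{Γ,Ω}(u) + I_{Γ,Ω}(v), interpreted in [0,∞] (in particular the left side is finite whenever the right side is). -/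
open scoped ENNReal

/-- the interaction energy `I_{Γ,Ω}` decreases under min/max:
`I_{Γ,Ω}(min{u,v}) + I_{Γ,Ω}(max{u,v}) ≤ I_{Γ,Ω}(u) + I_{Γ,Ω}(v)`, in `[0,∞]`. -/
theorem interaction_min_max_decrease {d : ℕ}
    (J : (Fin d → ℤ) → (Fin d → ℤ) → ℝ) (hJ : ∀ i j, 0 ≤ J i j)
    (u v : (Fin d → ℤ) → ℝ)
    (hu : ∀ i, u i = 1 ∨ u i = -1) (hv : ∀ i, v i = 1 ∨ v i = -1)
    (Γ Ω : Set (Fin d → ℤ)) :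
    (∑' (i : Γ) (j : Ω),
        ENNReal.ofReal (J i.1 j.1 * (1 - min (u i.1) (v i.1) * min (u j.1) (v j.1))))
      + (∑' (i : Γ) (j : Ω),
        ENNReal.ofReal (J i.1 j.1 * (1 - max (u i.1) (v i.1) * max (u j.1) (v j.1))))
      ≤ (∑' (i : Γ) (j : Ω), ENNReal.ofReal (J i.1 j.1 * (1 - u i.1 * u j.1)))
        + (∑' (i : Γ) (j : Ω), ENNReal.ofReal (J i.1 j.1 * (1 - v i.1 * v j.1))) := by
  rw [← ENNReal.tsum_add, ← ENNReal.tsum_add]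
  refine ENNReal.tsum_le_tsum fun i => ?_
  rw [← ENNReal.tsum_add, ← ENNReal.tsum_add]
  refine ENNReal.tsum_le_tsum fun j => ?_
  have hJ' := hJ i.1 j.1
  have key : ∀ a b : ℝ, 0 ≤ a → (0 ≤ b → ENNReal.ofReal a + ENNReal.ofReal b =
      ENNReal.ofReal (a + b)) := fun a b ha hb => (ENNReal.ofReal_add ha hb).symm
  rcases hu i.1 with h1 | h1 <;> rcases hv i.1 with h2 | h2 <;>
    rcases hu j.1 with h3 | h3 <;> rcases hv j.1 with h4 | h4 <;>
    simp only [h1, h2, h3, h4] <;> norm_num <;>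
    rw [← ENNReal.ofReal_add (by nlinarith) (by nlinarith),
        ← ENNReal.ofReal_add (by nlinarith) (by nlinarith)] <;>
    exact ENNReal.ofReal_le_ofReal (by nlinarith)
end

section
/- For every finite nonempty set Γ ⊂ Z^d, every site i ∈ Z^d, and every s ∈ (0,1), one has Σ_{j ∈ Z^d \ Γ} |i - j|_∞^{-(d+s)} ≥ c (#Γ)^{-s/d}, where c > 0 is a constant depending only on s (one may take c = 2^{-s}/s). -/
open scoped ENNReal

/-- Key real inequality. -/
lemma key_real_ineq (s : ℝ) (hs0 : 0 < s) (hs1 : s < 1) (d N R : ℕ)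
    (hd : 1 ≤ d) (hN : 1 ≤ N) (hR : 1 ≤ R) (hRd : (R : ℝ) ^ d ≤ 2 * (N + 1)) :
    (1 / 8 : ℝ) * (N : ℝ) ^ (-(s / d)) ≤ (N + 1) * (R : ℝ) ^ (-((d : ℝ) + s)) := by
  have hA : (0 : ℝ) < N := by exact_mod_cast hN
  have hB : (0 : ℝ) < R := by exact_mod_cast hR
  have hd' : (0 : ℝ) < d := by exact_mod_cast hd
  have hσ : 0 < s / d := div_pos hs0 hd'
  -- B^s ≤ 4 * N^(s/d)
  have h1 : (R : ℝ) ^ s ≤ 4 * (N : ℝ) ^ (s / d) := by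
    have e1 : (R : ℝ) ^ s = ((R : ℝ) ^ (d : ℝ)) ^ (s / d) := by
      rw [← Real.rpow_mul hB.le]
      congr 1
      field_simp
    rw [e1, Real.rpow_natCast]
    calc ((R : ℝ) ^ d) ^ (s / d) ≤ (4 * N) ^ (s / d) := by
          apply Real.rpow_le_rpow (by positivity) _ hσ.le
          calc (R:ℝ)^d ≤ 2 * (N+1) := hRd
            _ ≤ 4 * N := by
                have h1N : (1:ℝ) ≤ N := by exact_mod_cast hN
                linarith
      _ = 4 ^ (s/d) * (N:ℝ) ^ (s/d) := Real.mul_rpow (by norm_num) hA.le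
      _ ≤ 4 * (N:ℝ) ^ (s/d) := by
          gcongr
          calc (4:ℝ) ^ (s/d) ≤ 4 ^ (1:ℝ) := by
                apply Real.rpow_le_rpow_of_exponent_le (by norm_num)
                rw [div_le_one hd']
                calc s ≤ 1 := hs1.le
                  _ ≤ (d:ℝ) := by exact_mod_cast hd
            _ = 4 := Real.rpow_one 4
  have hBds : (R : ℝ) ^ (-((d : ℝ) + s)) = ((R:ℝ) ^ d * (R:ℝ) ^ s)⁻¹ := by
    rw [Real.rpow_neg hB.le, Real.rpow_add hB, Real.rpow_natCast]
  rw [hBds, Real.rpow_neg hA.le]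
  have hNσ : (0:ℝ) < (N:ℝ) ^ (s/d) := Real.rpow_pos_of_pos hA _
  have hRd' : (0:ℝ) < (R:ℝ)^d := by positivity
  have hRs : (0:ℝ) < (R:ℝ)^s := Real.rpow_pos_of_pos hB _
  have hmul : (R:ℝ)^d * (R:ℝ)^s ≤ (2*((N:ℝ)+1)) * (4 * (N:ℝ)^(s/d)) :=
    mul_le_mul hRd h1 hRs.le (by positivity)
  calc (1/8 : ℝ) * ((N:ℝ)^(s/d))⁻¹
      = ((N:ℝ)+1) * ((2*((N:ℝ)+1)) * (4 * (N:ℝ)^(s/d)))⁻¹ := by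
        field_simp
        ring
    _ ≤ ((N:ℝ)+1) * ((R:ℝ)^d * (R:ℝ)^s)⁻¹ := by
        apply mul_le_mul_of_nonneg_left _ (by positivity)
        exact inv_anti₀ (by positivity) hmul


lemma final_step (s : ℝ) (hs0 : 0 < s) (hs1 : s < 1) (d N R t : ℕ)
    (hd : 1 ≤ d) (hN : 1 ≤ N) (hR : 1 ≤ R) (hRd : R ^ d ≤ 2 * (N + 1)) (ht : N + 1 ≤ t) :
    ENNReal.ofReal ((1/8 : ℝ) * (N : ℝ) ^ (-(s / d))) ≤
      (t : ℝ≥0∞) * ENNReal.ofReal ((R : ℝ) ^ (-((d : ℝ) + s))) := by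
  rw [← ENNReal.ofReal_natCast t, ← ENNReal.ofReal_mul (by positivity)]
  apply ENNReal.ofReal_le_ofReal
  calc (1/8 : ℝ) * (N : ℝ) ^ (-(s / d))
      ≤ ((N:ℝ) + 1) * (R : ℝ) ^ (-((d : ℝ) + s)) := by
        refine key_real_ineq s hs0 hs1 d N R hd hN hR ?_
        calc ((R:ℝ))^d = ((R^d : ℕ) : ℝ) := by push_cast; ring
          _ ≤ ((2*(N+1) : ℕ) : ℝ) := by exact_mod_cast hRd
          _ = 2*((N:ℝ)+1) := by push_cast; ring
    _ ≤ (t : ℝ) * (R : ℝ) ^ (-((d : ℝ) + s)) := by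
        apply mul_le_mul_of_nonneg_right _ (Real.rpow_nonneg (by positivity) _)
        exact_mod_cast ht

/-- for every finite nonempty `Γ ⊂ ℤ^d` and every site `i`,
`Σ_{j ∉ Γ, j ≠ i} |i - j|_∞^{-(d+s)} ≥ c (#Γ)^{-s/d}` with `c > 0` depending only on `s`. -/
theorem discrete_tail_lower_bound (s : ℝ) (hs : s ∈ Set.Ioo (0 : ℝ) 1) :
    ∃ c : ℝ, 0 < c ∧
      ∀ (d : ℕ), 1 ≤ d → ∀ Γ : Finset (Fin d → ℤ), Γ.Nonempty → ∀ i : Fin d → ℤ,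
        ENNReal.ofReal (c * (Γ.card : ℝ) ^ (-(s / d))) ≤
          ∑' j : {j : Fin d → ℤ // j ∉ Γ ∧ j ≠ i},
            ENNReal.ofReal
              (((Finset.univ.sup fun n => (i n - j.1 n).natAbs : ℕ) : ℝ) ^ (-((d : ℝ) + s))) := by
  obtain ⟨hs0, hs1⟩ := hs
  refine ⟨1/8, by norm_num, ?_⟩
  intro d hd Γ hΓ i
  set N := Γ.card with hNdef
  have hN : 1 ≤ N := Finset.card_pos.mpr hΓ
  -- choose the minimal radius R with (2R+1)^d ≥ 2(N+1)
  have hex : ∃ R : ℕ, 2*(N+1) ≤ (2*R+1)^d := by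
    refine ⟨N+1, ?_⟩
    calc 2*(N+1) ≤ 2*(N+1)+1 := by omega
      _ = (2*(N+1)+1)^1 := (pow_one _).symm
      _ ≤ (2*(N+1)+1)^d := Nat.pow_le_pow_right (by omega) hd
  set R := Nat.find hex with hRdef
  have hRspec : 2*(N+1) ≤ (2*R+1)^d := Nat.find_spec hex
  have hR1 : 1 ≤ R := by
    by_contra h
    have hR0 : R = 0 := by omega
    rw [hR0] at hRspec
    simp at hRspec
    omega
  have hRmin : ¬ 2*(N+1) ≤ (2*(R-1)+1)^d := Nat.find_min hex (by omega)
  have hRd : R^d ≤ 2*(N+1) := by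
    have h1 : R ≤ 2*(R-1)+1 := by omega
    have h2 : R^d ≤ (2*(R-1)+1)^d := Nat.pow_le_pow_left h1 d
    omega
  -- the ball of radius R around i
  set B : Finset (Fin d → ℤ) := Fintype.piFinset fun n => Finset.Icc (i n - R) (i n + R)
    with hBdef
  have hBcard : B.card = (2*R+1)^d := by
    rw [hBdef, Fintype.card_piFinset]
    have h : ∀ n : Fin d, (Finset.Icc (i n - R) (i n + R)).card = 2*R+1 := by
      intro n
      rw [Int.card_Icc]
      omega
    simp only [h, Finset.prod_const, Finset.card_univ, Fintype.card_fin]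
  set S : Finset (Fin d → ℤ) := B \ insert i Γ with hSdef
  have hScard : N + 1 ≤ S.card := by
    have h1 : B.card - (insert i Γ).card ≤ S.card := Finset.le_card_sdiff _ _
    have h2 : (insert i Γ).card ≤ N + 1 := by
      calc (insert i Γ).card ≤ Γ.card + 1 := Finset.card_insert_le _ _
        _ = N + 1 := by omega
    omega
  -- each point of S contributes at least R^{-(d+s)}
  have hterm : ∀ j ∈ S, ENNReal.ofReal ((R:ℝ) ^ (-((d:ℝ)+s))) ≤
      ENNReal.ofReal (((Finset.univ.sup fun n => (i n - j n).natAbs : ℕ) : ℝ) ^ (-((d:ℝ)+s))) := by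
    intro j hj
    obtain ⟨hjB, hjΓi⟩ := Finset.mem_sdiff.mp hj
    set M := (Finset.univ.sup fun n => (i n - j n).natAbs : ℕ) with hMdef
    have hM1 : 1 ≤ M := by
      have hne : j ≠ i := by intro h; exact hjΓi (by simp [h])
      obtain ⟨n, hn⟩ := Function.ne_iff.mp hne
      have h1 : 1 ≤ (i n - j n).natAbs := by omega
      exact le_trans h1 (Finset.le_sup (f := fun n => (i n - j n).natAbs) (Finset.mem_univ n))
    have hMR : M ≤ R := by
      apply Finset.sup_le
      intro n _
      have := (Fintype.mem_piFinset.mp hjB) n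
      rw [Finset.mem_Icc] at this
      omega
    apply ENNReal.ofReal_le_ofReal
    apply Real.rpow_le_rpow_of_nonpos (by exact_mod_cast hM1) (by exact_mod_cast hMR)
    have : (0:ℝ) < (d:ℝ) + s := by positivity
    linarith
  -- sum over the finite subset S of the complement
  classical
  set T : Finset {j : Fin d → ℤ // j ∉ Γ ∧ j ≠ i} := S.subtype _ with hTdef
  have hTcard : T.card = S.card := by
    rw [hTdef, Finset.card_subtype, Finset.filter_true_of_mem]
    intro j hj
    obtain ⟨hjB, hjΓi⟩ := Finset.mem_sdiff.mp hj
    simp only [Finset.mem_insert, not_or] at hjΓi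
    exact ⟨hjΓi.2, hjΓi.1⟩
  have hsum : (T.card : ℝ≥0∞) * ENNReal.ofReal ((R:ℝ) ^ (-((d:ℝ)+s))) ≤
      ∑' j : {j : Fin d → ℤ // j ∉ Γ ∧ j ≠ i},
        ENNReal.ofReal
          (((Finset.univ.sup fun n => (i n - j.1 n).natAbs : ℕ) : ℝ) ^ (-((d : ℝ) + s))) := by
    calc (T.card : ℝ≥0∞) * ENNReal.ofReal ((R:ℝ) ^ (-((d:ℝ)+s)))
        = ∑ _x ∈ T, ENNReal.ofReal ((R:ℝ) ^ (-((d:ℝ)+s))) := by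
          rw [Finset.sum_const, nsmul_eq_mul]
      _ ≤ ∑ x ∈ T, ENNReal.ofReal
            (((Finset.univ.sup fun n => (i n - x.1 n).natAbs : ℕ) : ℝ) ^ (-((d : ℝ) + s))) := by
          refine Finset.sum_le_sum fun x hx => ?_
          exact hterm x.1 (Finset.mem_subtype.mp hx)
      _ ≤ _ := ENNReal.sum_le_tsum T
  exact le_trans (final_step s hs0 hs1 d N R T.card hd hN hR1 hRd (hTcard ▸ hScard)) hsum
end

section
/- For every finite set Γ ⊂ Z^d and every s ∈ (0,1), one has Σ_{i ∈ Γ} Σ_{j ∈ Z^d \ Γ} |i - j|_∞^{-(d+s)} ≥ c (#Γ)^{(d-s)/d}, where c > 0 depends only on s. -/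
open scoped ENNReal

private lemma rpow_neg_anti {a b : ℝ} (ha : 0 < a) (hab : a ≤ b) (t : ℝ) (ht : 0 ≤ t) :
    b ^ (-t) ≤ a ^ (-t) := by
  rw [Real.rpow_neg (by linarith), Real.rpow_neg ha.le]
  have h1 : (0:ℝ) < a ^ t := Real.rpow_pos_of_pos ha t
  have h2 : a ^ t ≤ b ^ t := Real.rpow_le_rpow ha.le hab ht
  exact inv_anti₀ h1 h2

private lemma key_real (s : ℝ) (hs0 : 0 < s) (hs1 : s < 1) {d N R : ℕ}
    (hd : 1 ≤ d) (hN : 1 ≤ N) (hR : 1 ≤ R) (hRd : R ^ d < 2 * N) :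
    (1/4 : ℝ) * (N:ℝ) ^ (((d:ℝ) - s) / d) ≤ (N:ℝ) * ((N:ℝ) * (R:ℝ) ^ (-((d:ℝ) + s))) := by
  have hdr : (0:ℝ) < d := by exact_mod_cast Nat.pos_of_ne_zero (by omega)
  have hdr1 : (1:ℝ) ≤ d := by exact_mod_cast hd
  have hNr : (1:ℝ) ≤ N := by exact_mod_cast hN
  have hNr0 : (0:ℝ) < N := by linarith
  have hRr : (1:ℝ) ≤ R := by exact_mod_cast hR
  have hRr0 : (0:ℝ) < R := by linarith
  have hRdr : (R:ℝ) ^ (d:ℝ) ≤ 2 * N := by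
    rw [Real.rpow_natCast]
    exact_mod_cast hRd.le
  have h2N : (1:ℝ) ≤ 2 * N := by linarith
  have hsd0 : 0 ≤ s / d := by positivity
  have hsd : s / d ≤ 1 := by
    rw [div_le_one hdr]; linarith
  have hRs : (R:ℝ) ^ s ≤ 2 * (N:ℝ) ^ (s / (d:ℝ)) := by
    have h1 : (R:ℝ) ^ s = ((R:ℝ) ^ (d:ℝ)) ^ (s / (d:ℝ)) := by
      rw [← Real.rpow_mul hRr0.le]
      congr 1
      field_simp
    rw [h1]
    calc ((R:ℝ) ^ (d:ℝ)) ^ (s / (d:ℝ)) ≤ (2 * N) ^ (s / (d:ℝ)) :=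
          Real.rpow_le_rpow (by positivity) hRdr hsd0
      _ = 2 ^ (s / (d:ℝ)) * (N:ℝ) ^ (s / (d:ℝ)) := Real.mul_rpow (by norm_num) (by positivity)
      _ ≤ 2 * (N:ℝ) ^ (s / (d:ℝ)) := by
          gcongr
          calc (2:ℝ) ^ (s / (d:ℝ)) ≤ (2:ℝ) ^ (1:ℝ) :=
                Real.rpow_le_rpow_of_exponent_le (by norm_num) hsd
            _ = 2 := Real.rpow_one 2
  have hkey : (R:ℝ) ^ ((d:ℝ) + s) ≤ 4 * (N:ℝ) ^ (1 + s / (d:ℝ)) := by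
    rw [Real.rpow_add hRr0, Real.rpow_add hNr0, Real.rpow_one]
    calc (R:ℝ) ^ (d:ℝ) * (R:ℝ) ^ s ≤ (2 * N) * (2 * (N:ℝ) ^ (s / (d:ℝ))) := by
          apply mul_le_mul hRdr hRs (by positivity) (by positivity)
      _ = 4 * ((N:ℝ) * (N:ℝ) ^ (s / (d:ℝ))) := by ring
  have hpos : (0:ℝ) < (R:ℝ) ^ ((d:ℝ) + s) := Real.rpow_pos_of_pos hRr0 _
  rw [Real.rpow_neg hRr0.le]
  rw [show (N:ℝ) * ((N:ℝ) * ((R:ℝ) ^ ((d:ℝ) + s))⁻¹) = (N:ℝ) * (N:ℝ) / ((R:ℝ) ^ ((d:ℝ) + s))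
    by ring]
  rw [le_div_iff₀ hpos]
  calc (1/4 : ℝ) * (N:ℝ) ^ (((d:ℝ) - s) / d) * (R:ℝ) ^ ((d:ℝ) + s)
      ≤ (1/4 : ℝ) * (N:ℝ) ^ (((d:ℝ) - s) / d) * (4 * (N:ℝ) ^ (1 + s / (d:ℝ))) := by
        have : (0:ℝ) ≤ (1/4 : ℝ) * (N:ℝ) ^ (((d:ℝ) - s) / d) := by positivity
        exact mul_le_mul_of_nonneg_left hkey this
    _ = (N:ℝ) ^ (((d:ℝ) - s) / d) * (N:ℝ) ^ (1 + s / (d:ℝ)) := by ring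
    _ = (N:ℝ) ^ (((d:ℝ) - s) / d + (1 + s / (d:ℝ))) := (Real.rpow_add hNr0 _ _).symm
    _ = (N:ℝ) ^ ((2:ℕ):ℝ) := by
        congr 1
        field_simp
        ring
    _ = (N:ℝ) * (N:ℝ) := by rw [Real.rpow_natCast]; ring

/-- discrete nonlocal isoperimetric inequality: for every finite `Γ ⊂ ℤ^d`,
`Σ_{i ∈ Γ} Σ_{j ∉ Γ} |i - j|_∞^{-(d+s)} ≥ c (#Γ)^{(d-s)/d}` with `c > 0` depending only on `s`. -/
theorem discrete_nonlocal_isoperimetric (s : ℝ) (hs : s ∈ Set.Ioo (0 : ℝ) 1) :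
    ∃ c : ℝ, 0 < c ∧
      ∀ (d : ℕ), 1 ≤ d → ∀ Γ : Finset (Fin d → ℤ),
        ENNReal.ofReal (c * (Γ.card : ℝ) ^ (((d : ℝ) - s) / d)) ≤
          ∑ i ∈ Γ, ∑' j : {j : Fin d → ℤ // j ∉ Γ},
            ENNReal.ofReal
              (((Finset.univ.sup fun n => (i n - j.1 n).natAbs : ℕ) : ℝ) ^ (-((d : ℝ) + s))) := by
  classical
  obtain ⟨hs0, hs1⟩ := hs
  refine ⟨1/4, by norm_num, ?_⟩
  intro d hd Γ
  have hdr : (0:ℝ) < d := by exact_mod_cast Nat.pos_of_ne_zero (by omega)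
  have hdr1 : (1:ℝ) ≤ d := by exact_mod_cast hd
  set N := Γ.card with hNdef
  rcases Nat.eq_zero_or_pos N with h0 | hNpos
  · have he : ((d:ℝ) - s) / d ≠ 0 := by
      apply ne_of_gt
      apply div_pos _ hdr
      linarith
    rw [show ((Γ.card : ℝ)) = (N:ℝ) by rw [hNdef]]
    rw [h0]
    simp [Real.zero_rpow he]
  · -- choose R minimal with (2R+1)^d ≥ 2N
    have hfind : ∃ R, 2 * N ≤ (2 * R + 1) ^ d :=
      ⟨N, le_trans (by omega) (Nat.le_self_pow (by omega) _)⟩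
    set R := Nat.find hfind with hRdef
    have hRspec : 2 * N ≤ (2 * R + 1) ^ d := Nat.find_spec hfind
    have hR1 : 1 ≤ R := by
      rcases Nat.eq_zero_or_pos R with h | h
      · exfalso
        rw [h] at hRspec
        simp at hRspec
        omega
      · exact h
    have hRmin : ¬ 2 * N ≤ (2 * (R - 1) + 1) ^ d := Nat.find_min hfind (by omega)
    have hRd : R ^ d < 2 * N := by
      have hle : R ≤ 2 * (R - 1) + 1 := by omega
      have := Nat.pow_le_pow_left hle d
      omega
    -- per-point lower bound
    have hpt : ∀ i ∈ Γ, ENNReal.ofReal ((N:ℝ) * (R:ℝ) ^ (-((d:ℝ) + s))) ≤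
        ∑' j : {j : Fin d → ℤ // j ∉ Γ},
          ENNReal.ofReal
            (((Finset.univ.sup fun n => (i n - j.1 n).natAbs : ℕ) : ℝ) ^ (-((d : ℝ) + s))) := by
      intro i hi
      set B : Finset (Fin d → ℤ) :=
        Fintype.piFinset (fun n => Finset.Icc (i n - R) (i n + R)) with hB
      have hBcard : B.card = (2 * R + 1) ^ d := by
        rw [hB, Fintype.card_piFinset]
        have : ∀ n : Fin d, (Finset.Icc (i n - (R:ℤ)) (i n + R)).card = 2 * R + 1 := by
          intro n
          rw [Int.card_Icc]
          omega
        simp only [this]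
        rw [Finset.prod_const, Finset.card_univ, Fintype.card_fin]
      set T : Finset {j : Fin d → ℤ // j ∉ Γ} := (B \ Γ).subtype (fun j => j ∉ Γ) with hT
      have hTcard : T.card = (B \ Γ).card := by
        rw [hT, Finset.card_subtype]
        congr 1
        apply Finset.filter_true_of_mem
        intro x hx
        exact (Finset.mem_sdiff.mp hx).2
      have hTN : N ≤ T.card := by
        rw [hTcard]
        have h1 : B.card - Γ.card ≤ (B \ Γ).card := Finset.le_card_sdiff Γ B
        rw [hBcard] at h1
        omega
      have hterm : ∀ x ∈ T,
          ENNReal.ofReal ((R:ℝ) ^ (-((d:ℝ) + s))) ≤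
            ENNReal.ofReal
              (((Finset.univ.sup fun n => (i n - x.1 n).natAbs : ℕ) : ℝ) ^ (-((d : ℝ) + s))) := by
        intro x hx
        have hxB : x.1 ∈ B := (Finset.mem_sdiff.mp (Finset.mem_subtype.mp hx)).1
        set m : ℕ := Finset.univ.sup fun n => (i n - x.1 n).natAbs with hm
        have hmle : m ≤ R := by
          apply Finset.sup_le
          intro n _
          have := (Finset.mem_Icc.mp ((Fintype.mem_piFinset.mp hxB) n))
          omega
        have hm1 : 1 ≤ m := by
          have hne : x.1 ≠ i := by
            intro h
            exact x.2 (h ▸ hi)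
          obtain ⟨n, hn⟩ : ∃ n, x.1 n ≠ i n := by
            by_contra h
            push_neg at h
            exact hne (funext h)
          have h1 : 1 ≤ (i n - x.1 n).natAbs := by omega
          exact le_trans h1
            (Finset.le_sup (f := fun n => (i n - x.1 n).natAbs) (Finset.mem_univ n))
        apply ENNReal.ofReal_le_ofReal
        exact rpow_neg_anti (by exact_mod_cast hm1 : (0:ℝ) < m) (by exact_mod_cast hmle)
          _ (by linarith)
      calc ENNReal.ofReal ((N:ℝ) * (R:ℝ) ^ (-((d:ℝ) + s)))
          = (N : ℝ≥0∞) * ENNReal.ofReal ((R:ℝ) ^ (-((d:ℝ) + s))) := by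
            rw [ENNReal.ofReal_mul (Nat.cast_nonneg N), ENNReal.ofReal_natCast]
        _ ≤ (T.card : ℝ≥0∞) * ENNReal.ofReal ((R:ℝ) ^ (-((d:ℝ) + s))) := by
            exact mul_le_mul_left (by exact_mod_cast hTN) _
        _ = ∑ _x ∈ T, ENNReal.ofReal ((R:ℝ) ^ (-((d:ℝ) + s))) := by
            rw [Finset.sum_const, nsmul_eq_mul]
        _ ≤ ∑ x ∈ T, ENNReal.ofReal
              (((Finset.univ.sup fun n => (i n - x.1 n).natAbs : ℕ) : ℝ) ^ (-((d : ℝ) + s))) :=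
            Finset.sum_le_sum hterm
        _ ≤ ∑' j : {j : Fin d → ℤ // j ∉ Γ},
              ENNReal.ofReal
                (((Finset.univ.sup fun n => (i n - j.1 n).natAbs : ℕ) : ℝ) ^ (-((d : ℝ) + s))) :=
            ENNReal.sum_le_tsum T
    calc ENNReal.ofReal (1/4 * (N:ℝ) ^ (((d:ℝ) - s) / d))
        ≤ ENNReal.ofReal ((N:ℝ) * ((N:ℝ) * (R:ℝ) ^ (-((d:ℝ) + s)))) :=
          ENNReal.ofReal_le_ofReal (key_real s hs0 hs1 hd hNpos hR1 hRd)
      _ = (N : ℝ≥0∞) * ENNReal.ofReal ((N:ℝ) * (R:ℝ) ^ (-((d:ℝ) + s))) := by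
          rw [ENNReal.ofReal_mul (Nat.cast_nonneg N), ENNReal.ofReal_natCast]
      _ = ∑ _i ∈ Γ, ENNReal.ofReal ((N:ℝ) * (R:ℝ) ^ (-((d:ℝ) + s))) := by
          rw [Finset.sum_const, nsmul_eq_mul, hNdef]
      _ ≤ ∑ i ∈ Γ, ∑' j : {j : Fin d → ℤ // j ∉ Γ},
            ENNReal.ofReal
              (((Finset.univ.sup fun n => (i n - j.1 n).natAbs : ℕ) : ℝ) ^ (-((d : ℝ) + s))) :=
          Finset.sum_le_sum hpt
end

section
/- Let s ∈ (0,1) and Ω ⊂ R^d be a bounded open set with Lipschitz boundary. Then ∫_Ω dist(x, ∂Ω)^{-s} dx < ∞. -/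
open scoped ENNReal NNReal
open MeasureTheory

/-- A set `Ω ⊆ ℝ^{d+1}` has Lipschitz boundary if near any boundary point, up to a
(Euclidean) isometric change of coordinates, `Ω` is the open epigraph of a Lipschitz
function of `d` variables. -/
def HasLipschitzBoundary {d : ℕ} (Ω : Set (EuclideanSpace ℝ (Fin (d + 1)))) : Prop :=
  ∀ p ∈ frontier Ω, ∃ r : ℝ, 0 < r ∧
    ∃ (e : EuclideanSpace ℝ (Fin (d + 1)) ≃ᵢ (WithLp 2 (EuclideanSpace ℝ (Fin d) × ℝ)))
      (φ : EuclideanSpace ℝ (Fin d) → ℝ) (L : ℝ≥0),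
      LipschitzWith L φ ∧
      ∀ x ∈ Metric.ball p r,
        (x ∈ Ω ↔ φ ((WithLp.equiv 2 (EuclideanSpace ℝ (Fin d) × ℝ) (e x)).1)
          < (WithLp.equiv 2 (EuclideanSpace ℝ (Fin d) × ℝ) (e x)).2)

noncomputable section AuxSplit

/-- Auxiliary measurable equivalence splitting off the last coordinate. -/
def splitP (d : ℕ) : EuclideanSpace ℝ (Fin (d+1)) ≃ᵐ ((EuclideanSpace ℝ (Fin d)) × ℝ) :=
  (MeasurableEquiv.toLp 2 (Fin (d+1) → ℝ)).symm.trans <|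
    (MeasurableEquiv.piFinSuccAbove (fun _ : Fin (d+1) => ℝ) (Fin.last d)).trans <|
      (MeasurableEquiv.prodComm (α := ℝ) (β := Fin d → ℝ)).trans <|
        (MeasurableEquiv.toLp 2 (Fin d → ℝ)).prodCongr (MeasurableEquiv.refl ℝ)

lemma splitP_apply {d : ℕ} (x : EuclideanSpace ℝ (Fin (d+1))) :
    splitP d x = (WithLp.toLp 2 (fun j => x (Fin.castSucc j)), x (Fin.last d)) := by
  simp [splitP, MeasurableEquiv.piFinSuccAbove, MeasurableEquiv.toLp_apply,
    Fin.succAbove_last]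
  rfl

lemma splitP_measurePreserving (d : ℕ) : MeasurePreserving (splitP d) volume volume := by
  have h1 := EuclideanSpace.volume_preserving_symm_measurableEquiv_toLp (Fin (d+1))
  have h2 := MeasureTheory.volume_preserving_piFinSuccAbove (fun _ : Fin (d+1) => ℝ) (Fin.last d)
  have h3 : MeasurePreserving (MeasurableEquiv.prodComm (α := ℝ) (β := Fin d → ℝ))
      volume volume := by
    rw [Measure.volume_eq_prod, Measure.volume_eq_prod]
    exact Measure.measurePreserving_swap
  have h4 : MeasurePreserving
      ((MeasurableEquiv.toLp 2 (Fin d → ℝ)).prodCongr (MeasurableEquiv.refl ℝ))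
      volume volume := by
    rw [Measure.volume_eq_prod, Measure.volume_eq_prod]
    exact ((EuclideanSpace.volume_preserving_symm_measurableEquiv_toLp (Fin d)).symm).prod
      (MeasurePreserving.id _)
  exact h4.comp (h3.comp (h2.comp h1))

/-- The same map as an isometric equivalence onto the `ℓ²` product. -/
def splitIso (d : ℕ) :
    EuclideanSpace ℝ (Fin (d+1)) ≃ᵢ WithLp 2 ((EuclideanSpace ℝ (Fin d)) × ℝ) where
  toEquiv := (splitP d).toEquiv.trans (WithLp.equiv 2 _).symm
  isometry_toFun := by
    intro x y
    rw [edist_dist, edist_dist]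
    congr 1
    show dist ((WithLp.equiv 2 _).symm (splitP d x)) ((WithLp.equiv 2 _).symm (splitP d y)) = _
    rw [WithLp.prod_dist_eq_of_L2]
    simp only [WithLp.equiv_symm_apply, WithLp.toLp_fst, WithLp.toLp_snd]
    rw [splitP_apply, splitP_apply]
    rw [EuclideanSpace.dist_eq, EuclideanSpace.dist_eq]
    rw [Real.sq_sqrt (by positivity)]
    rw [Fin.sum_univ_castSucc]

lemma isometryEquiv_measurePreserving {d : ℕ}
    (h : EuclideanSpace ℝ (Fin (d+1)) ≃ᵢ EuclideanSpace ℝ (Fin (d+1))) :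
    MeasurePreserving h volume volume := by
  have key : ⇑h = (fun z => z + h 0) ∘ ⇑h.toRealLinearIsometryEquiv := by
    funext x
    simp [IsometryEquiv.toRealLinearIsometryEquiv_apply]
  rw [key]
  exact (measurePreserving_add_right volume (h 0)).comp
    h.toRealLinearIsometryEquiv.measurePreserving

lemma chartMP {d : ℕ}
    (e : EuclideanSpace ℝ (Fin (d+1)) ≃ᵢ WithLp 2 ((EuclideanSpace ℝ (Fin d)) × ℝ)) :
    MeasurePreserving (fun x => WithLp.equiv 2 ((EuclideanSpace ℝ (Fin d)) × ℝ) (e x))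
      volume volume := by
  have hcomp : (fun x => WithLp.equiv 2 ((EuclideanSpace ℝ (Fin d)) × ℝ) (e x))
      = (splitP d) ∘ ⇑(e.trans (splitIso d).symm) := by
    funext x
    show _ = splitP d ((splitIso d).symm (e x))
    have h1 : (splitIso d).symm (e x) = (splitP d).symm (WithLp.equiv 2 _ (e x)) := rfl
    rw [h1, MeasurableEquiv.apply_symm_apply]
  rw [hcomp]
  exact (splitP_measurePreserving d).comp
    (isometryEquiv_measurePreserving (e.trans (splitIso d).symm))

lemma chart_collar_volume {d : ℕ}
    (e : EuclideanSpace ℝ (Fin (d+1)) ≃ᵢ WithLp 2 ((EuclideanSpace ℝ (Fin d)) × ℝ))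
    (φ : EuclideanSpace ℝ (Fin d) → ℝ) (hφ : Continuous φ) (c R : ℝ)
    (z : EuclideanSpace ℝ (Fin d)) :
    volume ((fun x => WithLp.equiv 2 ((EuclideanSpace ℝ (Fin d)) × ℝ) (e x)) ⁻¹'
        (regionBetween φ (fun y => φ y + c) (Metric.closedBall z R)))
      = ENNReal.ofReal c * volume (Metric.closedBall z R) := by
  have hmeas : MeasurableSet (regionBetween φ (fun y => φ y + c) (Metric.closedBall z R)) :=
    measurableSet_regionBetween hφ.measurable (hφ.measurable.add_const c)
      measurableSet_closedBall
  rw [(chartMP e).measure_preimage hmeas.nullMeasurableSet]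
  rw [Measure.volume_eq_prod,
    volume_regionBetween_eq_lintegral hφ.measurable.aemeasurable
      ((hφ.measurable.add_const c).aemeasurable) measurableSet_closedBall]
  simp [mul_comm]

lemma dist_fst_le_L2 {α β : Type*} [SeminormedAddCommGroup α] [SeminormedAddCommGroup β]
    (w w' : WithLp 2 (α × β)) : dist w.fst w'.fst ≤ dist w w' := by
  rw [WithLp.prod_dist_eq_of_L2, Real.le_sqrt dist_nonneg]
  · nlinarith [dist_nonneg (x := w.snd) (y := w'.snd), dist_nonneg (x := w.fst) (y := w'.fst)]
  · positivity

lemma dist_snd_le_L2 {α β : Type*} [SeminormedAddCommGroup α] [SeminormedAddCommGroup β]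
    (w w' : WithLp 2 (α × β)) : dist w.snd w'.snd ≤ dist w w' := by
  rw [WithLp.prod_dist_eq_of_L2, Real.le_sqrt dist_nonneg]
  · nlinarith [dist_nonneg (x := w.snd) (y := w'.snd), dist_nonneg (x := w.fst) (y := w'.fst)]
  · positivity

end AuxSplit

/-- on a bounded open set `Ω` with Lipschitz boundary,
`∫_Ω dist(x, ∂Ω)^{-s} dx < ∞` for every `s ∈ (0,1)`. -/
theorem dist_boundary_neg_power_integrable {d : ℕ} (s : ℝ) (hs : s ∈ Set.Ioo (0 : ℝ) 1)
    (Ω : Set (EuclideanSpace ℝ (Fin (d + 1))))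
    (hΩo : IsOpen Ω) (hΩb : Bornology.IsBounded Ω) (hΩl : HasLipschitzBoundary Ω) :
    (∫⁻ x in Ω, ENNReal.ofReal ((Metric.infDist x (frontier Ω)) ^ (-s))) < ⊤ := by
  classical
  obtain ⟨hs0, hs1⟩ := hs
  set F := frontier Ω with hFdef
  rcases Set.eq_empty_or_nonempty F with hF | hF
  · -- frontier empty: the integrand is zero
    have : ∀ x, ENNReal.ofReal ((Metric.infDist x F) ^ (-s)) = 0 := by
      intro x
      rw [hF, Metric.infDist_empty, Real.zero_rpow (by simpa using hs0.ne')]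
      simp
    simp only [this]
    simp
  -- main case
  have hFclosed : IsClosed F := isClosed_frontier
  have hdisj : ∀ x ∈ Ω, x ∉ F := by
    intro x hx hxF
    rw [hFdef, hΩo.frontier_eq] at hxF
    exact hxF.2 hx
  -- choose charts
  choose r hr e φ L hL hiff using fun p : F => hΩl p p.2
  -- finite subcover of the compact frontier
  have hFcpt : IsCompact F :=
    Metric.isCompact_of_isClosed_isBounded hFclosed
      (hΩb.closure.subset frontier_subset_closure)
  obtain ⟨t, ht⟩ := hFcpt.elim_finite_subcover
      (fun p : F => Metric.ball (p : EuclideanSpace ℝ (Fin (d+1))) (r p / 4))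
      (fun p => Metric.isOpen_ball)
      (fun x hx => Set.mem_iUnion.mpr ⟨⟨x, hx⟩, Metric.mem_ball_self (by
        have := hr ⟨x, hx⟩; linarith)⟩)
  have htne : t.Nonempty := by
    obtain ⟨x, hx⟩ := hF
    obtain ⟨p, hp⟩ := Set.mem_iUnion.mp (ht hx)
    simp only [Set.mem_iUnion] at hp
    obtain ⟨hpt, -⟩ := hp
    exact ⟨p, hpt⟩
  set ε₀ : ℝ := t.inf' htne (fun p => r p / 4) with hε₀def
  have hε₀pos : 0 < ε₀ := by
    rw [hε₀def, Finset.lt_inf'_iff]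
    intro p _
    have := hr p; linarith
  -- chart coordinates
  set G : F → EuclideanSpace ℝ (Fin (d+1)) → (EuclideanSpace ℝ (Fin d)) × ℝ :=
    fun p x => WithLp.equiv 2 (EuclideanSpace ℝ (Fin d) × ℝ) (e p x) with hGdef
  -- the collar chart sets
  set S : F → ℝ → Set (EuclideanSpace ℝ (Fin (d+1))) :=
    fun p ε => (G p) ⁻¹'
      (regionBetween (φ p) (fun y => φ p y + (1 + (L p : ℝ)) * ε)
        (Metric.closedBall (G p ↑p).1 (r p))) with hSdef
  have hSvol : ∀ (p : F) (ε : ℝ), volume (S p ε)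
      = ENNReal.ofReal ((1 + (L p : ℝ)) * ε)
        * volume (Metric.closedBall (G p ↑p).1 (r p)) :=
    fun p ε => chart_collar_volume (e p) (φ p) (hL p).continuous _ _ _
  -- component distance bounds
  have hfst : ∀ (p : F) (u v : EuclideanSpace ℝ (Fin (d+1))),
      dist (G p u).1 (G p v).1 ≤ dist u v := by
    intro p u v
    have h1 : dist (G p u).1 (G p v).1 ≤ dist (e p u) (e p v) := dist_fst_le_L2 _ _
    rwa [IsometryEquiv.dist_eq] at h1
  have hsnd : ∀ (p : F) (u v : EuclideanSpace ℝ (Fin (d+1))),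
      dist (G p u).2 (G p v).2 ≤ dist u v := by
    intro p u v
    have h1 : dist (G p u).2 (G p v).2 ≤ dist (e p u) (e p v) := dist_snd_le_L2 _ _
    rwa [IsometryEquiv.dist_eq] at h1
  -- collar inclusion
  have hincl : ∀ ε : ℝ, 0 < ε → ε ≤ ε₀ →
      (Ω ∩ {x | Metric.infDist x F < ε}) ⊆ ⋃ p ∈ t, S p ε := by
    intro ε hεpos hεle x hx
    obtain ⟨hxΩ, hxd⟩ := hx
    obtain ⟨z, hzF, hz⟩ := (Metric.infDist_lt_iff hF).mp hxd
    obtain ⟨p, hp⟩ := Set.mem_iUnion.mp (ht hzF)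
    simp only [Set.mem_iUnion] at hp
    obtain ⟨hpt, hzp⟩ := hp
    have hεr : ε ≤ r p / 4 := le_trans hεle (Finset.inf'_le _ hpt)
    have hzpball : dist z (p : EuclideanSpace ℝ (Fin (d+1))) < r p / 4 :=
      Metric.mem_ball.mp hzp
    have hxp : dist x (p : EuclideanSpace ℝ (Fin (d+1))) < r p / 2 := by
      calc dist x (p : EuclideanSpace ℝ (Fin (d+1))) ≤ dist x z + dist z p := dist_triangle _ _ _
        _ < ε + r p / 4 := by linarith
        _ ≤ r p / 2 := by linarith
    have hxball : x ∈ Metric.ball (p : EuclideanSpace ℝ (Fin (d+1))) (r p) :=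
      Metric.mem_ball.mpr (by have := hr p; linarith)
    have hzball : z ∈ Metric.ball (p : EuclideanSpace ℝ (Fin (d+1))) (r p) :=
      Metric.mem_ball.mpr (by have := hr p; linarith)
    have hzΩ : z ∉ Ω := fun h => hdisj z h hzF
    have hzup : (G p z).2 ≤ φ p (G p z).1 := by
      by_contra hcon
      exact hzΩ (((hiff p) z hzball).mpr (lt_of_not_ge hcon))
    have hxlow : φ p (G p x).1 < (G p x).2 := ((hiff p) x hxball).mp hxΩ
    apply Set.mem_iUnion.mpr
    refine ⟨p, Set.mem_iUnion.mpr ⟨hpt, ?_⟩⟩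
    refine ⟨?_, hxlow, ?_⟩
    · -- fst in closed ball
      apply Metric.mem_closedBall.mpr
      calc dist (G p x).1 (G p ↑p).1 ≤ dist x (p : EuclideanSpace ℝ (Fin (d+1))) := hfst p x ↑p
        _ ≤ r p := by have := hr p; linarith
    · -- upper bound
      have h1 : (G p x).2 - (G p z).2 ≤ dist x z := by
        have := hsnd p x z
        rw [Real.dist_eq] at this
        have := le_abs_self ((G p x).2 - (G p z).2)
        linarith [hsnd p x z, abs_sub_abs_le_abs_sub ((G p x).2) ((G p z).2)]
      have h2 : φ p (G p z).1 - φ p (G p x).1 ≤ (L p : ℝ) * dist x z := by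
        have hlip := (hL p).dist_le_mul (G p z).1 (G p x).1
        have habs := le_abs_self (φ p (G p z).1 - φ p (G p x).1)
        rw [Real.dist_eq] at hlip
        have hcomp : dist (G p z).1 (G p x).1 ≤ dist x z := by
          rw [dist_comm x z]; exact hfst p z x
        have hLnn : (0:ℝ) ≤ (L p : ℝ) := (L p).coe_nonneg
        nlinarith
      have hLnn : (0:ℝ) ≤ (L p : ℝ) := (L p).coe_nonneg
      have : (G p x).2 < φ p (G p x).1 + (1 + (L p : ℝ)) * ε := by nlinarith
      exact this
  -- collar measure constant
  set C : ℝ≥0∞ := ∑ p ∈ t, ENNReal.ofReal (1 + (L p : ℝ))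
      * volume (Metric.closedBall (G p ↑p).1 (r p)) with hCdef
  have hCfin : C ≠ ⊤ := by
    rw [hCdef]
    refine (ENNReal.sum_lt_top.mpr fun p _ => ?_).ne
    exact ENNReal.mul_lt_top ENNReal.ofReal_lt_top Metric.isBounded_closedBall.measure_lt_top
  have hcollar : ∀ ε : ℝ, 0 < ε → ε ≤ ε₀ →
      volume (Ω ∩ {x | Metric.infDist x F < ε}) ≤ ENNReal.ofReal ε * C := by
    intro ε hεpos hεle
    calc volume (Ω ∩ {x | Metric.infDist x F < ε})
        ≤ volume (⋃ p ∈ t, S p ε) := measure_mono (hincl ε hεpos hεle)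
      _ ≤ ∑ p ∈ t, volume (S p ε) := measure_biUnion_finset_le t _
      _ = ∑ p ∈ t, ENNReal.ofReal ε * (ENNReal.ofReal (1 + (L p : ℝ))
            * volume (Metric.closedBall (G p ↑p).1 (r p))) := by
          refine Finset.sum_congr rfl fun p _ => ?_
          rw [hSvol p ε, ENNReal.ofReal_mul (by have := (L p).coe_nonneg; linarith)]
          ring
      _ = ENNReal.ofReal ε * C := by rw [hCdef, Finset.mul_sum]
  -- dyadic collars
  set T : ℕ → Set (EuclideanSpace ℝ (Fin (d+1))) :=
    fun n => Ω ∩ {x | Metric.infDist x F < ε₀ / 2 ^ n} with hTdef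
  have hTvol : ∀ n, volume (T n) ≤ ENNReal.ofReal (ε₀ / 2 ^ n) * C := by
    intro n
    exact hcollar _ (by positivity) (div_le_self hε₀pos.le (one_le_pow₀ one_le_two))
  -- decomposition of Ω
  have hsub : Ω ⊆ (Ω \ T 0) ∪ ⋃ n, (T n \ T (n+1)) := by
    intro x hxΩ
    by_cases hx0 : x ∈ T 0
    · right
      have hxF : x ∉ F := hdisj x hxΩ
      have hpos : 0 < Metric.infDist x F :=
        (hFclosed.notMem_iff_infDist_pos hF).mp hxF
      have hex : ∃ n : ℕ, x ∉ T n := by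
        obtain ⟨n, hn⟩ := exists_pow_lt_of_lt_one
          (div_pos hpos hε₀pos) (by norm_num : (1:ℝ)/2 < 1)
        refine ⟨n, fun hmem => ?_⟩
        have hlt : Metric.infDist x F < ε₀ / 2 ^ n := hmem.2
        have : (1/2 : ℝ)^n = 1 / 2^n := by rw [div_pow]; norm_num
        rw [this, div_lt_div_iff₀ (by positivity) hε₀pos] at hn
        have h2n : (0:ℝ) < 2^n := by positivity
        have : ε₀ / 2^n < Metric.infDist x F := by
          rw [div_lt_iff₀ h2n]; linarith
        linarith
      set n₁ := Nat.find hex with hn₁def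
      have h₁ : x ∉ T n₁ := Nat.find_spec hex
      have hn₁pos : n₁ ≠ 0 := fun h => h₁ (h ▸ hx0)
      have hprev : x ∈ T (n₁ - 1) := by
        by_contra hcon
        have hle : n₁ ≤ n₁ - 1 := Nat.find_le hcon
        omega
      refine Set.mem_iUnion.mpr ⟨n₁ - 1, hprev, ?_⟩
      rwa [show n₁ - 1 + 1 = n₁ from by omega]
    · left; exact ⟨hxΩ, hx0⟩
  -- the integrand and bounds
  set f : EuclideanSpace ℝ (Fin (d+1)) → ℝ≥0∞ :=
    fun x => ENNReal.ofReal ((Metric.infDist x F) ^ (-s)) with hfdef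
  have hbound : ∀ (b : ℝ), 0 < b → ∀ x, b ≤ Metric.infDist x F →
      f x ≤ ENNReal.ofReal (b ^ (-s)) := by
    intro b hb x hbx
    exact ENNReal.ofReal_le_ofReal
      (Real.rpow_le_rpow_of_nonpos hb hbx (neg_nonpos.mpr hs0.le))
  -- piece 0
  have hpiece0 : (∫⁻ x in Ω \ T 0, f x) ≤ ENNReal.ofReal (ε₀ ^ (-s)) * volume Ω := by
    calc (∫⁻ x in Ω \ T 0, f x)
        ≤ ∫⁻ _ in Ω \ T 0, ENNReal.ofReal (ε₀ ^ (-s)) := by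
          refine setLIntegral_mono measurable_const fun x hx => ?_
          refine hbound ε₀ hε₀pos x ?_
          by_contra hcon
          exact hx.2 ⟨hx.1, by simpa using lt_of_not_ge hcon⟩
      _ = ENNReal.ofReal (ε₀ ^ (-s)) * volume (Ω \ T 0) := setLIntegral_const _ _
      _ ≤ ENNReal.ofReal (ε₀ ^ (-s)) * volume Ω :=
          mul_le_mul_right (measure_mono Set.diff_subset) _
  -- geometric data
  set ρ : ℝ := (2:ℝ) ^ (s - 1) with hρdef
  have hρpos : 0 < ρ := Real.rpow_pos_of_pos two_pos _
  have hρlt : ρ < 1 := Real.rpow_lt_one_of_one_lt_of_neg one_lt_two (by linarith)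
  set A : ℝ := ε₀ ^ (1 - s) * 2 ^ s with hAdef
  have hApos : 0 < A := by positivity
  have hkey : ∀ n : ℕ, (ε₀ / 2 ^ (n+1)) ^ (-s) * (ε₀ / 2 ^ n) = A * ρ ^ n := by
    intro n
    have hl : (0:ℝ) < (ε₀ / 2 ^ (n+1)) ^ (-s) * (ε₀ / 2 ^ n) := by positivity
    have hrr : (0:ℝ) < A * ρ ^ n := by positivity
    rw [← Real.exp_log hl, ← Real.exp_log hrr]
    congr 1
    rw [Real.log_mul (by positivity) (by positivity), Real.log_mul (by positivity) (by positivity),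
      Real.log_rpow (by positivity), Real.log_div (by positivity) (by positivity),
      Real.log_div (by positivity) (by positivity), Real.log_pow, Real.log_pow,
      hAdef, Real.log_mul (by positivity) (by positivity), Real.log_rpow hε₀pos,
      Real.log_rpow two_pos, hρdef, Real.log_pow, Real.log_rpow two_pos]
    push_cast
    ring
  -- pieces n
  have hpiecen : ∀ n : ℕ, (∫⁻ x in T n \ T (n+1), f x)
      ≤ ENNReal.ofReal A * ENNReal.ofReal ρ ^ n * C := by
    intro n
    have hb : (0:ℝ) < ε₀ / 2 ^ (n+1) := by positivity
    calc (∫⁻ x in T n \ T (n+1), f x)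
        ≤ ∫⁻ _ in T n \ T (n+1), ENNReal.ofReal ((ε₀ / 2 ^ (n+1)) ^ (-s)) := by
          refine setLIntegral_mono measurable_const fun x hx => ?_
          refine hbound _ hb x ?_
          by_contra hcon
          exact hx.2 ⟨hx.1.1, lt_of_not_ge hcon⟩
      _ = ENNReal.ofReal ((ε₀ / 2 ^ (n+1)) ^ (-s)) * volume (T n \ T (n+1)) :=
          setLIntegral_const _ _
      _ ≤ ENNReal.ofReal ((ε₀ / 2 ^ (n+1)) ^ (-s)) * (ENNReal.ofReal (ε₀ / 2 ^ n) * C) :=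
          mul_le_mul_right (le_trans (measure_mono Set.diff_subset) (hTvol n)) _
      _ = ENNReal.ofReal ((ε₀ / 2 ^ (n+1)) ^ (-s) * (ε₀ / 2 ^ n)) * C := by
          rw [ENNReal.ofReal_mul (Real.rpow_nonneg hb.le _), mul_assoc]
      _ = ENNReal.ofReal (A * ρ ^ n) * C := by rw [hkey n]
      _ = ENNReal.ofReal A * ENNReal.ofReal ρ ^ n * C := by
          rw [ENNReal.ofReal_mul hApos.le, ENNReal.ofReal_pow hρpos.le]
  -- assemble
  have hmain : (∫⁻ x in Ω, f x)
      ≤ ENNReal.ofReal (ε₀ ^ (-s)) * volume Ω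
        + ENNReal.ofReal A * (1 - ENNReal.ofReal ρ)⁻¹ * C := by
    calc (∫⁻ x in Ω, f x)
        ≤ ∫⁻ x in (Ω \ T 0) ∪ ⋃ n, (T n \ T (n+1)), f x :=
          lintegral_mono' (Measure.restrict_mono hsub le_rfl) le_rfl
      _ ≤ (∫⁻ x in Ω \ T 0, f x) + ∫⁻ x in ⋃ n, (T n \ T (n+1)), f x :=
          lintegral_union_le _ _ _
      _ ≤ ENNReal.ofReal (ε₀ ^ (-s)) * volume Ω + ∑' n, ∫⁻ x in T n \ T (n+1), f x :=
          add_le_add hpiece0 (lintegral_iUnion_le _ _)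
      _ ≤ ENNReal.ofReal (ε₀ ^ (-s)) * volume Ω
            + ∑' n, ENNReal.ofReal A * ENNReal.ofReal ρ ^ n * C :=
          add_le_add_right (ENNReal.tsum_le_tsum hpiecen) _
      _ = ENNReal.ofReal (ε₀ ^ (-s)) * volume Ω
            + ENNReal.ofReal A * (1 - ENNReal.ofReal ρ)⁻¹ * C := by
          congr 1
          rw [ENNReal.tsum_mul_right, ENNReal.tsum_mul_left, ENNReal.tsum_geometric]
  refine lt_of_le_of_lt hmain ?_
  have h1 : ENNReal.ofReal (ε₀ ^ (-s)) * volume Ω < ⊤ :=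
    ENNReal.mul_lt_top ENNReal.ofReal_lt_top hΩb.measure_lt_top
  have hρ1 : ENNReal.ofReal ρ < 1 := by
    rw [← ENNReal.ofReal_one]
    exact ENNReal.ofReal_lt_ofReal_iff_of_nonneg hρpos.le |>.mpr hρlt
  have h2 : ENNReal.ofReal A * (1 - ENNReal.ofReal ρ)⁻¹ * C < ⊤ := by
    refine ENNReal.mul_lt_top (ENNReal.mul_lt_top ENNReal.ofReal_lt_top ?_) hCfin.lt_top
    exact ENNReal.inv_lt_top.mpr (tsub_pos_of_lt hρ1)
  exact ENNReal.add_lt_top.mpr ⟨h1, h2⟩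
end

section
/- Let d ≥ 1, s ∈ (0,1), and let (v_m)_{m≥0} be a sequence of nonnegative reals with v_0 ≥ 1, v_1 ≥ 1, satisfying for all ℓ ≥ 2 the recursive inequality Σ_{m=0}^{ℓ} v_m^{(d-s)/d} ≤ c_5 (ℓ+1)^{1-s} v_ℓ for a constant c_5 > 0. Then v_ℓ ≥ c̄ ℓ^d for all ℓ ≥ 0, where c̄ := [4^{-d-1+s} / (c_5 (d+1-s))]^{d/s} (assuming c̄ ≤ 1). -/
/-- MVT-type inequality: for `q ≥ 1` and `b ≥ 1`, `b^q - (b-1)^q ≤ q * b^(q-1)`. -/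
lemma aux_mvt_rpow (q : ℝ) (hq : 1 ≤ q) (b : ℝ) (hb : 1 ≤ b) :
    b ^ q - (b - 1) ^ q ≤ q * b ^ (q - 1) := by
  have hb0 : 0 < b := by linarith
  have h1b : 1 / b ≤ 1 := by rw [div_le_one hb0]; exact hb
  have hx : -1 ≤ -(1 / b) := by linarith
  have hber := one_add_mul_self_le_rpow_one_add hx hq
  have h1x : (0:ℝ) ≤ 1 + -(1/b) := by linarith
  have hmul : b ^ q * (1 + -(1/b)) ^ q = (b - 1) ^ q := by
    rw [← Real.mul_rpow hb0.le h1x]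
    congr 1
    field_simp
    ring
  have hbq : 0 < b ^ q := Real.rpow_pos_of_pos hb0 _
  have hstep : b ^ q * (1 + q * -(1/b)) ≤ (b - 1) ^ q := by
    rw [← hmul]
    exact mul_le_mul_of_nonneg_left hber hbq.le
  have hpow : b ^ q / b = b ^ (q - 1) := by
    rw [Real.rpow_sub hb0, Real.rpow_one]
  have hexp : b ^ q * (1 + q * -(1/b)) = b ^ q - q * (b ^ q / b) := by ring
  rw [hexp, hpow] at hstep
  linarith

/-- Riemann-sum lower bound: `n^(p+1)/(p+1) ≤ ∑_{m=0}^n m^p` for `p ≥ 0`. -/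
lemma aux_sum_rpow (p : ℝ) (hp : 0 ≤ p) (n : ℕ) :
    (n : ℝ) ^ (p + 1) / (p + 1) ≤ ∑ m ∈ Finset.range (n + 1), (m : ℝ) ^ p := by
  have hp1 : (0:ℝ) < p + 1 := by linarith
  induction n with
  | zero =>
    simp only [Nat.cast_zero, Finset.range_one, Finset.sum_singleton]
    rw [Real.zero_rpow (by linarith : p + 1 ≠ 0), zero_div]
    positivity
  | succ n ihn =>
    rw [Finset.sum_range_succ]
    have key := aux_mvt_rpow (p + 1) (by linarith)
      ((n:ℝ) + 1) (by nlinarith [Nat.cast_nonneg (α := ℝ) n])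
    have hb1 : ((n:ℝ) + 1) - 1 = (n:ℝ) := by ring
    have he : p + 1 - 1 = p := by ring
    rw [hb1, he] at key
    have hstep : ((n:ℝ) + 1) ^ (p + 1) / (p + 1)
        ≤ (n:ℝ) ^ (p + 1) / (p + 1) + ((n:ℝ) + 1) ^ p := by
      rw [div_add' _ _ _ hp1.ne', div_le_div_iff_of_pos_right hp1]
      linarith
    push_cast
    linarith [ihn]

/-- iteration lemma for the density estimates. If `(v_m)` is nonnegative with
`v_0, v_1 ≥ 1` and satisfies `Σ_{m=0}^ℓ v_m^{(d-s)/d} ≤ c₅ (ℓ+1)^{1-s} v_ℓ` for all `ℓ ≥ 2`,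
then `v_ℓ ≥ c̄ ℓ^d` for all `ℓ`, with `c̄ = [4^{-d-1+s}/(c₅(d+1-s))]^{d/s}` (assumed `≤ 1`). -/
theorem density_iteration_lemma (d : ℕ) (hd : 1 ≤ d) (s : ℝ) (hs : s ∈ Set.Ioo (0 : ℝ) 1)
    (c₅ : ℝ) (hc₅ : 0 < c₅) (v : ℕ → ℝ)
    (hv : ∀ m, 0 ≤ v m) (hv0 : 1 ≤ v 0) (hv1 : 1 ≤ v 1)
    (hrec : ∀ ℓ : ℕ, 2 ≤ ℓ →
      ∑ m ∈ Finset.range (ℓ + 1), (v m) ^ (((d : ℝ) - s) / d)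
        ≤ c₅ * ((ℓ : ℝ) + 1) ^ (1 - s) * v ℓ)
    (hcbar : ((4 : ℝ) ^ (-(d : ℝ) - 1 + s) / (c₅ * ((d : ℝ) + 1 - s))) ^ ((d : ℝ) / s) ≤ 1) :
    ∀ ℓ : ℕ,
      ((4 : ℝ) ^ (-(d : ℝ) - 1 + s) / (c₅ * ((d : ℝ) + 1 - s))) ^ ((d : ℝ) / s)
        * (ℓ : ℝ) ^ (d : ℝ) ≤ v ℓ := by
  obtain ⟨hs0, hs1⟩ := hs
  have hD1 : (1:ℝ) ≤ (d:ℝ) := by exact_mod_cast hd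
  have hD0 : (0:ℝ) < (d:ℝ) := by linarith
  have hds : (0:ℝ) < (d:ℝ) - s := by linarith
  have hd1s : (0:ℝ) < (d:ℝ) + 1 - s := by linarith
  set A : ℝ := (4:ℝ) ^ (-(d:ℝ) - 1 + s) / (c₅ * ((d:ℝ) + 1 - s)) with hA_def
  have hA : 0 < A := div_pos (Real.rpow_pos_of_pos (by norm_num) _) (mul_pos hc₅ hd1s)
  set C : ℝ := A ^ ((d:ℝ) / s) with hC_def
  have hC0 : 0 < C := Real.rpow_pos_of_pos hA _
  set q : ℝ := ((d:ℝ) - s) / (d:ℝ) with hq_def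
  have hq0 : 0 ≤ q := by positivity
  have hCq : C ^ (s / (d:ℝ)) = A := by
    rw [hC_def, ← Real.rpow_mul hA.le]
    rw [show (d:ℝ) / s * (s / (d:ℝ)) = 1 by field_simp, Real.rpow_one]
  have hCsplit : C ^ q * A = C := by
    rw [← hCq, ← Real.rpow_add hC0]
    rw [show q + s / (d:ℝ) = 1 by rw [hq_def]; field_simp; ring, Real.rpow_one]
  have hAc : A * (c₅ * ((d:ℝ) + 1 - s)) = (4:ℝ) ^ (-(d:ℝ) - 1 + s) := by
    rw [hA_def, div_mul_cancel₀ _ (mul_pos hc₅ hd1s).ne']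
  have h4inv : (4:ℝ) ^ (-(d:ℝ) - 1 + s) * (4:ℝ) ^ ((d:ℝ) + 1 - s) = 1 := by
    rw [← Real.rpow_add (by norm_num)]
    norm_num
  have h4pos : (0:ℝ) < (4:ℝ) ^ (-(d:ℝ) - 1 + s) := Real.rpow_pos_of_pos (by norm_num) _
  have hCqpos : (0:ℝ) < C ^ q := Real.rpow_pos_of_pos hC0 q
  clear_value A C q
  intro ℓ
  induction ℓ using Nat.strong_induction_on with
  | _ ℓ ih =>
    match ℓ, ih with
    | 0, _ =>
      simp only [Nat.cast_zero]
      rw [Real.zero_rpow hD0.ne', mul_zero]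
      exact hv 0
    | 1, _ =>
      simp only [Nat.cast_one, Real.one_rpow, mul_one]
      exact le_trans hcbar hv1
    | (n + 2), ih =>
      have hN3 : (0:ℝ) < (n:ℝ) + 3 := by positivity
      -- termwise lower bound
      have hterm : ∀ m ∈ Finset.range (n + 2),
          C ^ q * (m:ℝ) ^ ((d:ℝ) - s) ≤ (v m) ^ q := by
        intro m hm
        rw [Finset.mem_range] at hm
        have him := ih m (by omega)
        have h1 : (C * (m:ℝ) ^ (d:ℝ)) ^ q ≤ (v m) ^ q :=
          Real.rpow_le_rpow (by positivity) him hq0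
        have hm2 : ((m:ℝ) ^ (d:ℝ)) ^ q = (m:ℝ) ^ ((d:ℝ) - s) := by
          rw [← Real.rpow_mul (Nat.cast_nonneg m)]
          congr 1
          rw [hq_def]
          field_simp
        rw [← hm2, ← Real.mul_rpow hC0.le (by positivity)]
        exact h1
      -- sum lower bound via Riemann sum
      have hsum1 : C ^ q * (((n:ℝ) + 1) ^ ((d:ℝ) + 1 - s) / ((d:ℝ) + 1 - s))
          ≤ ∑ m ∈ Finset.range (n + 2), (v m) ^ q := by
        have h := aux_sum_rpow ((d:ℝ) - s) hds.le (n + 1)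
        push_cast at h
        rw [show (d:ℝ) - s + 1 = (d:ℝ) + 1 - s by ring] at h
        calc C ^ q * (((n:ℝ) + 1) ^ ((d:ℝ) + 1 - s) / ((d:ℝ) + 1 - s))
            ≤ C ^ q * ∑ m ∈ Finset.range (n + 2), (m:ℝ) ^ ((d:ℝ) - s) :=
              mul_le_mul_of_nonneg_left h hCqpos.le
          _ = ∑ m ∈ Finset.range (n + 2), C ^ q * (m:ℝ) ^ ((d:ℝ) - s) := Finset.mul_sum _ _ _
          _ ≤ ∑ m ∈ Finset.range (n + 2), (v m) ^ q := Finset.sum_le_sum hterm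
      have hsum2 : ∑ m ∈ Finset.range (n + 2), (v m) ^ q
          ≤ ∑ m ∈ Finset.range (n + 3), (v m) ^ q := by
        exact Finset.sum_le_sum_of_subset_of_nonneg
          (Finset.range_subset_range.mpr (by omega))
          (fun i _ _ => Real.rpow_nonneg (hv i) q)
      have h4 := hrec (n + 2) (by omega)
      push_cast at h4
      rw [show (n:ℝ) + 2 + 1 = (n:ℝ) + 3 by ring] at h4
      have hchain : C ^ q * (((n:ℝ) + 1) ^ ((d:ℝ) + 1 - s) / ((d:ℝ) + 1 - s))
          ≤ c₅ * ((n:ℝ) + 3) ^ (1 - s) * v (n + 2) :=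
        le_trans hsum1 (le_trans hsum2 h4)
      -- geometric comparison
      have h43 : ((n:ℝ) + 3) ≤ 4 * ((n:ℝ) + 1) := by
        have : (0:ℝ) ≤ (n:ℝ) := Nat.cast_nonneg n
        linarith
      have hgeo : ((n:ℝ) + 2) ^ (d:ℝ) * ((n:ℝ) + 3) ^ (1 - s)
          ≤ (4:ℝ) ^ ((d:ℝ) + 1 - s) * ((n:ℝ) + 1) ^ ((d:ℝ) + 1 - s) := by
        calc ((n:ℝ) + 2) ^ (d:ℝ) * ((n:ℝ) + 3) ^ (1 - s)
            ≤ ((n:ℝ) + 3) ^ (d:ℝ) * ((n:ℝ) + 3) ^ (1 - s) :=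
              mul_le_mul_of_nonneg_right
                (Real.rpow_le_rpow (by positivity) (by linarith) hD0.le)
                (Real.rpow_nonneg hN3.le _)
          _ = ((n:ℝ) + 3) ^ ((d:ℝ) + 1 - s) := by
              rw [← Real.rpow_add hN3]
              congr 1
              ring
          _ ≤ (4 * ((n:ℝ) + 1)) ^ ((d:ℝ) + 1 - s) :=
              Real.rpow_le_rpow (by positivity) h43 (by linarith)
          _ = (4:ℝ) ^ ((d:ℝ) + 1 - s) * ((n:ℝ) + 1) ^ ((d:ℝ) + 1 - s) :=
              Real.mul_rpow (by norm_num) (by positivity)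
      -- key algebraic inequality
      have hkey : C * ((n:ℝ) + 2) ^ (d:ℝ) * (c₅ * ((n:ℝ) + 3) ^ (1 - s)) * ((d:ℝ) + 1 - s)
          ≤ C ^ q * ((n:ℝ) + 1) ^ ((d:ℝ) + 1 - s) := by
        have h1 : C * ((n:ℝ) + 2) ^ (d:ℝ) * (c₅ * ((n:ℝ) + 3) ^ (1 - s)) * ((d:ℝ) + 1 - s)
            = C ^ q * ((4:ℝ) ^ (-(d:ℝ) - 1 + s)
                * (((n:ℝ) + 2) ^ (d:ℝ) * ((n:ℝ) + 3) ^ (1 - s))) := by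
          conv_lhs => rw [← hCsplit]
          rw [← hAc]
          ring
        rw [h1]
        calc C ^ q * ((4:ℝ) ^ (-(d:ℝ) - 1 + s)
                * (((n:ℝ) + 2) ^ (d:ℝ) * ((n:ℝ) + 3) ^ (1 - s)))
            ≤ C ^ q * ((4:ℝ) ^ (-(d:ℝ) - 1 + s)
                * ((4:ℝ) ^ ((d:ℝ) + 1 - s) * ((n:ℝ) + 1) ^ ((d:ℝ) + 1 - s))) :=
              mul_le_mul_of_nonneg_left
                (mul_le_mul_of_nonneg_left hgeo h4pos.le) hCqpos.le
          _ = C ^ q * ((n:ℝ) + 1) ^ ((d:ℝ) + 1 - s) := by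
              rw [show (4:ℝ) ^ (-(d:ℝ) - 1 + s)
                  * ((4:ℝ) ^ ((d:ℝ) + 1 - s) * ((n:ℝ) + 1) ^ ((d:ℝ) + 1 - s))
                  = ((4:ℝ) ^ (-(d:ℝ) - 1 + s) * (4:ℝ) ^ ((d:ℝ) + 1 - s))
                    * ((n:ℝ) + 1) ^ ((d:ℝ) + 1 - s) from by ring, h4inv, one_mul]
      -- conclude
      have hkey2 : C * ((n:ℝ) + 2) ^ (d:ℝ) * (c₅ * ((n:ℝ) + 3) ^ (1 - s))
          ≤ C ^ q * (((n:ℝ) + 1) ^ ((d:ℝ) + 1 - s) / ((d:ℝ) + 1 - s)) := by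
        rw [← mul_div_assoc, le_div_iff₀ hd1s]
        exact hkey
      have hfin : C * ((n:ℝ) + 2) ^ (d:ℝ) * (c₅ * ((n:ℝ) + 3) ^ (1 - s))
          ≤ c₅ * ((n:ℝ) + 3) ^ (1 - s) * v (n + 2) := le_trans hkey2 hchain
      have hden : (0:ℝ) < c₅ * ((n:ℝ) + 3) ^ (1 - s) := by positivity
      have : (↑(n + 2) : ℝ) = (n:ℝ) + 2 := by push_cast; ring
      rw [this]
      nlinarith [hfin, hden]
end

section
/- Let u : Z^d → {-1,1} be a configuration satisfying the Birkhoff property with respect to ω ∈ R^d \ {0} and period τ ∈ N: for every k ∈ τZ^d, the translate (T_k u)_i := u_{i-k} satisfies T_k u ≤ u pointwise if ω·k ≤ 0, and T_k u ≥ u if ω·k ≥ 0. Suppose there exists q ∈ Z^d with u_i = -1 for all i in the cube C_τ(q) := q + {0,1,...,τ-1}^d. Then u_i = -1 for every i ∈ Z^d with (ω/|ω|)·i ≥ (ω/|ω|)·q + √d τ, where |ω| is the ℓ^1 norm of ω. -/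
/-- rigidity of Birkhoff configurations with a fat plateau. If `u` has the
Birkhoff property with respect to `ω` and period `τ`, and `u ≡ -1` on a cube
`C_τ(q) = q + {0,…,τ-1}^d`, then `u_i = -1` whenever
`(ω/|ω|)·i ≥ (ω/|ω|)·q + √d τ` (with `|ω|` the `ℓ¹` norm of `ω`). -/
theorem birkhoff_plateau_rigidity {d : ℕ} (hd : 1 ≤ d) (τ : ℕ) (hτ : 1 ≤ τ)
    (ω : Fin d → ℝ) (hω : ω ≠ 0)
    (u : (Fin d → ℤ) → ℝ) (hu : ∀ i, u i = 1 ∨ u i = -1)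
    (hBirk : ∀ k : Fin d → ℤ, (∀ n, (τ : ℤ) ∣ k n) →
      (((∑ n, ω n * k n) ≤ 0 → ∀ i, u (i - k) ≤ u i) ∧
        (0 ≤ (∑ n, ω n * k n) → ∀ i, u i ≤ u (i - k))))
    (q : Fin d → ℤ)
    (hq : ∀ i : Fin d → ℤ, (∀ n, q n ≤ i n ∧ i n < q n + τ) → u i = -1) :
    ∀ i : Fin d → ℤ,
      (∑ n, ω n * q n) / (∑ n, |ω n|) + Real.sqrt d * τ ≤ (∑ n, ω n * i n) / (∑ n, |ω n|) →
      u i = -1 := by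
  intro i hi
  set S := ∑ n, |ω n| with hS
  have hSpos : 0 < S := by
    have hex : ∃ n, ω n ≠ 0 := by
      by_contra h; push_neg at h; exact hω (funext h)
    obtain ⟨n, hn⟩ := hex
    exact Finset.sum_pos' (fun m _ => abs_nonneg _) ⟨n, Finset.mem_univ n, abs_pos.mpr hn⟩
  have hτpos : (0:ℤ) < τ := by exact_mod_cast hτ
  have hτR : (0:ℝ) < τ := by exact_mod_cast hτ
  have hsqrt : (1:ℝ) ≤ Real.sqrt d := by
    have h1 : (1:ℝ) ≤ (d:ℝ) := by exact_mod_cast hd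
    nlinarith [Real.sq_sqrt (show (0:ℝ) ≤ d by positivity), Real.sqrt_nonneg (d:ℝ)]
  -- clear denominators
  have h1 : Real.sqrt d * τ * S ≤ (∑ n, ω n * i n) - (∑ n, ω n * q n) := by
    have h2 : Real.sqrt d * τ ≤ ((∑ n, ω n * i n) - (∑ n, ω n * q n)) / S := by
      rw [sub_div]; linarith
    calc Real.sqrt d * τ * S ≤ (((∑ n, ω n * i n) - (∑ n, ω n * q n)) / S) * S :=
          mul_le_mul_of_nonneg_right h2 hSpos.le
      _ = (∑ n, ω n * i n) - (∑ n, ω n * q n) := by field_simp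
  -- the translation vector
  set r : Fin d → ℤ := fun n => (i n - q n) % τ with hr
  set k : Fin d → ℤ := fun n => (i n - q n) - r n with hk
  have hdvd : ∀ n, (τ : ℤ) ∣ k n := by
    intro n
    simp only [hk, hr]
    exact Int.dvd_self_sub_of_emod_eq rfl
  have hr0 : ∀ n, 0 ≤ r n := fun n => Int.emod_nonneg _ (by exact_mod_cast hτpos.ne')
  have hrτ : ∀ n, r n < τ := fun n => Int.emod_lt_of_pos _ hτpos
  -- cube membership of i - k
  have hcube : u (i - k) = -1 := by
    apply hq
    intro n
    have : (i - k) n = q n + r n := by simp [hk]; ring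
    rw [this]
    constructor
    · linarith [hr0 n]
    · linarith [hrτ n]
  -- sum bound
  have hsum : (∑ n, ω n * (k n : ℝ))
      = (∑ n, ω n * i n) - (∑ n, ω n * q n) - ∑ n, ω n * (r n : ℝ) := by
    have hterm : ∀ n ∈ Finset.univ, ω n * ((k n : ℤ) : ℝ)
        = (ω n * i n - ω n * q n) - ω n * (r n : ℝ) := by
      intro n _
      simp only [hk]
      push_cast
      ring
    rw [Finset.sum_congr rfl hterm, Finset.sum_sub_distrib, Finset.sum_sub_distrib]
  have hrbound : (∑ n, ω n * (r n : ℝ)) ≤ τ * S := by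
    have : ∀ n ∈ Finset.univ, ω n * (r n : ℝ) ≤ (τ:ℝ) * |ω n| := by
      intro n _
      have h0 : (0:ℝ) ≤ (r n : ℝ) := by exact_mod_cast hr0 n
      have h1 : (r n : ℝ) ≤ τ := by
        have := hrτ n; exact_mod_cast this.le
      have h2 : ω n * (r n : ℝ) ≤ |ω n| * (r n : ℝ) :=
        mul_le_mul_of_nonneg_right (le_abs_self _) h0
      have h3 : |ω n| * (r n : ℝ) ≤ |ω n| * τ :=
        mul_le_mul_of_nonneg_left h1 (abs_nonneg _)
      linarith
    calc (∑ n, ω n * (r n : ℝ)) ≤ ∑ n, (τ:ℝ) * |ω n| := Finset.sum_le_sum this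
      _ = τ * S := by rw [hS, Finset.mul_sum]
  have hknn : 0 ≤ ∑ n, ω n * (k n : ℝ) := by
    rw [hsum]
    have h4 : (τ:ℝ) * S ≤ Real.sqrt d * τ * S := by
      have h5 : 0 ≤ (Real.sqrt d - 1) * ((τ:ℝ) * S) :=
        mul_nonneg (sub_nonneg.mpr hsqrt) (mul_nonneg hτR.le hSpos.le)
      nlinarith [h5]
    linarith
  have hle := (hBirk k hdvd).2 hknn i
  rw [hcube] at hle
  rcases hu i with h | h
  · rw [h] at hle; linarith
  · exact h
end
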